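/- Let G be a graph with no safe edges (all edges unsafe). Then G contains a Hamiltonian cycle if and only if G has an unsafe spanning connected subgraph T with at most n edges, where n is the number of vertices of G. -/

import Mathlib

open SimpleGraph

/-- `T` is an unsafe spanning connected subgraph of `G` with unsafe edge set `Unsafe`:
`T` consists of edges of `G`, the graph `(V, T)` is spanning and connected, and it
remains connected after removal of any single unsafe edge of `T`. -/
def IsUSCS {V : Type*} (G : SimpleGraph V) (Unsafe : Set (Sym2 V)) (T : Set (Sym2 V)) : Prop :=
  T ⊆ G.edgeSet ∧ (SimpleGraph.fromEdgeSet T).Connected ∧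
    ∀ e ∈ T, e ∈ Unsafe → (SimpleGraph.fromEdgeSet (T \ {e})).Connected

section Aux

variable {V : Type*}

lemma aux_reach {G : SimpleGraph V} {e : Sym2 V}
    (h : ∀ a b : V, e = s(a, b) → (G \ fromEdgeSet {e}).Reachable a b) :
    ∀ {a b : V} (_ : G.Walk a b), (G \ fromEdgeSet {e}).Reachable a b := by
  intro a b w
  induction w with
  | nil => exact Reachable.refl _
  | @cons u v w hadj q ih =>
    refine Reachable.trans ?_ ih
    by_cases he : s(u, v) = e
    · exact h u v he.symm
    · refine Adj.reachable ⟨hadj, ?_⟩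
      simp only [fromEdgeSet_adj, Set.mem_singleton_iff]
      rintro ⟨h1, -⟩
      exact he h1

lemma aux_conn {G : SimpleGraph V} {e : Sym2 V} (hG : G.Connected)
    (h : ∀ a b : V, e = s(a, b) → (G \ fromEdgeSet {e}).Reachable a b) :
    (G \ fromEdgeSet {e}).Connected := by
  haveI := hG.nonempty
  refine Connected.mk fun a b => ?_
  obtain ⟨w⟩ := hG.preconnected a b
  exact aux_reach h w

lemma closed_mem_tail {G : SimpleGraph V} {x : V} (c : G.Walk x x) (h : ¬c.Nil) :
    x ∈ c.support.tail := by
  cases c with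
  | nil => simp at h
  | cons hadj q => simp [q.end_mem_support]

lemma cycle_two_neighbors {G : SimpleGraph V} {x : V} (c : G.Walk x x) (hc : c.IsCycle) :
    ∃ a b, a ≠ b ∧ G.Adj x a ∧ G.Adj x b ∧ a ∈ c.support ∧ b ∈ c.support := by
  cases c with
  | nil => exact absurd rfl hc.ne_nil
  | @cons u b0 w hadj q =>
    obtain ⟨hq, hne⟩ := (Walk.cons_isCycle_iff q hadj).mp hc
    set r := q.reverse with hr
    have hrnil : ¬r.Nil := Walk.not_nil_of_ne hadj.ne
    have hredges : s(x, r.getVert 1) ∈ r.edges := by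
      have h1 : (Walk.cons (Walk.adj_snd (p := r) hrnil) r.tail).edges = r.edges :=
        congrArg Walk.edges (r.cons_tail_eq hrnil)
      rw [← h1, Walk.edges_cons]
      exact List.mem_cons_self
    have hab : r.getVert 1 ≠ b0 := by
      intro h
      apply hne
      have h2 := hredges
      rw [h, hr, Walk.edges_reverse, List.mem_reverse] at h2
      exact h2
    have hadj2 : G.Adj x (r.getVert 1) := Walk.adj_snd (p := r) hrnil
    have hmem : r.getVert 1 ∈ q.support := by
      have h1 : r.getVert 1 ∈ r.support := by
        rw [Walk.mem_support_iff_exists_getVert]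
        refine ⟨1, rfl, ?_⟩
        have := (Walk.nil_iff_length_eq (p := r)).not.mp hrnil
        omega
      rw [hr, Walk.support_reverse, List.mem_reverse] at h1
      exact h1
    exact ⟨r.getVert 1, b0, hab, hadj2, hadj, by simp [hmem], by simp [q.start_mem_support]⟩

lemma aux_card {W : Type*} {G : SimpleGraph W} [Fintype G.edgeSet] :
    G.edgeFinset.card = G.edgeSet.ncard := by
  rw [Set.ncard_eq_toFinset_card']
  rfl

end Aux

theorem stmt_0 {V : Type*} [Fintype V] [DecidableEq V] (G : SimpleGraph V) :
    G.IsHamiltonian ↔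
      ∃ T : Set (Sym2 V), IsUSCS G G.edgeSet T ∧ T.ncard ≤ Fintype.card V := by
  classical
  constructor
  · intro hG
    by_cases h1 : Fintype.card V = 1
    · refine ⟨∅, ⟨Set.empty_subset _, ?_, fun e he _ => absurd he (Set.notMem_empty e)⟩, ?_⟩
      · have hsub : Subsingleton V := Fintype.card_le_one_iff_subsingleton.mp h1.le
        have hne : Nonempty V := Fintype.card_pos_iff.mp (by omega)
        haveI := hne
        refine Connected.mk fun a b => ?_
        cases Subsingleton.elim a b
        exact Reachable.refl _
      · simp
    · obtain ⟨a, p, hp⟩ := hG h1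
      set T : Set (Sym2 V) := {e | e ∈ p.edges} with hT
      have hTsub : T ⊆ G.edgeSet := fun e he => p.edges_subset_edgeSet he
      have hTE : ∀ e ∈ p.edges, e ∈ (fromEdgeSet T).edgeSet := by
        intro e he
        rw [edgeSet_fromEdgeSet]
        exact ⟨he, G.not_isDiag_of_mem_edgeSet (p.edges_subset_edgeSet he)⟩
      set p' := p.transfer (fromEdgeSet T) hTE with hp'
      have hc' : p'.IsCycle := hp.isCycle.transfer hTE
      have hsup : ∀ v, v ∈ p'.support := by
        intro v
        rw [hp', Walk.support_transfer]
        exact hp.mem_support v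
      have hconn : (fromEdgeSet T).Connected := by
        haveI : Nonempty V := ⟨a⟩
        refine Connected.mk fun u v => ?_
        exact (Reachable.symm ⟨p'.takeUntil u (hsup u)⟩).trans ⟨p'.takeUntil v (hsup v)⟩
      refine ⟨T, ⟨hTsub, hconn, ?_⟩, ?_⟩
      · intro e heT _
        rw [fromEdgeSet_sdiff]
        refine aux_conn hconn (fun x y hxy => ?_)
        subst hxy
        exact (adj_and_reachable_delete_edges_iff_exists_cycle.mpr
          ⟨a, p', hc', by rw [hp', Walk.edges_transfer]; exact heT⟩).2
      · have hTfin : T = ↑p.edges.toFinset := by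
          ext e; simp [hT]
        rw [hTfin, Set.ncard_coe_finset,
          List.toFinset_card_of_nodup hp.isCycle.edges_nodup, Walk.length_edges, hp.length_eq]
  · rintro ⟨T, ⟨hTsub, hTc, hTdel⟩, hcard⟩ h1
    set H := fromEdgeSet T with hH
    have hne : Nonempty V := hTc.nonempty
    have hn2 : 2 ≤ Fintype.card V := by
      have := Fintype.card_pos (α := V)
      omega
    have hdel : ∀ e ∈ H.edgeSet, ∀ a b : V, e = s(a, b) →
        (H \ fromEdgeSet {e}).Reachable a b := by
      intro e he a b hab
      have heT : e ∈ T := ((edgeSet_fromEdgeSet T) ▸ he).1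
      have hcn := hTdel e heT (hTsub heT)
      rw [fromEdgeSet_sdiff] at hcn
      subst hab
      exact hcn.preconnected a b
    have hdeg2 : ∀ v : V, 2 ≤ H.degree v := by
      intro v
      obtain ⟨u, hu⟩ := Fintype.exists_ne_of_one_lt_card (by omega) v
      obtain ⟨w0⟩ := hTc.preconnected v u
      have hnil : ¬w0.Nil := Walk.not_nil_of_ne (Ne.symm hu)
      have hadj1 : H.Adj v (w0.getVert 1) := Walk.adj_snd (p := w0) hnil
      obtain ⟨q⟩ := hdel _ hadj1 v (w0.getVert 1) rfl
      have hqnil : ¬q.Nil := Walk.not_nil_of_ne hadj1.ne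
      have hadj2' : (H \ fromEdgeSet {s(v, w0.getVert 1)}).Adj v (q.getVert 1) :=
        Walk.adj_snd (p := q) hqnil
      have hadj2 : H.Adj v (q.getVert 1) := hadj2'.1
      have hne12 : w0.getVert 1 ≠ q.getVert 1 := by
        rintro h
        exact hadj2'.2 (by simp [fromEdgeSet_adj, ← h, hadj1.ne])
      have hss : ({w0.getVert 1, q.getVert 1} : Finset V) ⊆ H.neighborFinset v := by
        intro z hz
        rw [mem_neighborFinset]
        rcases Finset.mem_insert.mp hz with rfl | hz
        · exact hadj1
        · rw [Finset.mem_singleton] at hz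
          subst hz
          exact hadj2
      calc 2 = ({w0.getVert 1, q.getVert 1} : Finset V).card := by
            rw [Finset.card_insert_of_notMem (by simp [hne12]), Finset.card_singleton]
        _ ≤ (H.neighborFinset v).card := Finset.card_le_card hss
        _ = H.degree v := rfl
    have hEn : H.edgeSet.ncard ≤ Fintype.card V := by
      have hsub : H.edgeSet ⊆ T := by
        rw [hH, edgeSet_fromEdgeSet]
        exact Set.diff_subset
      exact le_trans (Set.ncard_le_ncard hsub (Set.toFinite T)) hcard
    have hdegle : ∀ v : V, H.degree v ≤ 2 := by
      intro v
      have hsum := H.sum_degrees_eq_twice_card_edges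
      have h2 : ∑ u, H.degree u ≤ 2 * Fintype.card V := by
        rw [hsum, @aux_card V H H.fintypeEdgeSet]
        omega
      have h3 : H.degree v + 2 * (Fintype.card V - 1) ≤ ∑ u, H.degree u := by
        rw [← Finset.add_sum_erase _ _ (Finset.mem_univ v)]
        refine Nat.add_le_add_left ?_ _
        calc 2 * (Fintype.card V - 1) = (Finset.univ.erase v).card * 2 := by
              rw [Finset.card_erase_of_mem (Finset.mem_univ v), Finset.card_univ, Nat.mul_comm]
          _ ≤ ∑ u ∈ Finset.univ.erase v, H.degree u := by
              have := Finset.card_nsmul_le_sum (Finset.univ.erase v) (fun u => H.degree u) 2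
                (fun u _ => hdeg2 u)
              simpa using this
      have h4 := le_trans h3 h2
      omega
    obtain ⟨v0⟩ := hne
    obtain ⟨u0, hu0⟩ := H.degree_pos_iff_exists_adj v0 |>.mp (by have := hdeg2 v0; omega)
    obtain ⟨b0, c, hc, hec⟩ := adj_and_reachable_delete_edges_iff_exists_cycle.mp
      ⟨hu0, hdel _ hu0 v0 u0 rfl⟩
    have hall : ∀ v, v ∈ c.support := by
      by_contra hcon
      push_neg at hcon
      obtain ⟨v, hv⟩ := hcon
      obtain ⟨w⟩ := hTc.preconnected b0 v
      obtain ⟨d, _, hdf, hds⟩ := w.exists_boundary_dart {z | z ∈ c.support}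
        c.start_mem_support hv
      have hx : d.fst ∈ c.support := hdf
      have hc' : (c.rotate _ hx).IsCycle := hc.rotate hx
      obtain ⟨a, b, hab, ha, hb, has, hbs⟩ := cycle_two_neighbors (c.rotate _ hx) hc'
      have hsub : ∀ z, z ∈ (c.rotate _ hx).support → z ∈ c.support := by
        intro z hz
        rw [Walk.support_eq_cons] at hz
        rcases List.mem_cons.mp hz with rfl | hz
        · exact hx
        · have hz' := (Walk.support_rotate c _ hx).mem_iff.mp hz
          rw [Walk.support_eq_cons c]
          exact List.mem_cons_of_mem _ hz'
      have hya : d.snd ≠ a := fun h => hds (h ▸ hsub a has)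
      have hyb : d.snd ≠ b := fun h => hds (h ▸ hsub b hbs)
      have h3 : ({a, b, d.snd} : Finset V) ⊆ H.neighborFinset d.fst := by
        intro z hz
        rw [mem_neighborFinset]
        rcases Finset.mem_insert.mp hz with rfl | hz
        · exact ha
        · rcases Finset.mem_insert.mp hz with rfl | hz
          · exact hb
          · rw [Finset.mem_singleton] at hz
            subst hz
            exact d.adj
      have hcard3 : ({a, b, d.snd} : Finset V).card = 3 := by
        rw [Finset.card_insert_of_notMem (by simp [hab, Ne.symm hya]),
          Finset.card_insert_of_notMem (by simp [Ne.symm hyb]), Finset.card_singleton]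
      have : 3 ≤ H.degree d.fst := by
        calc 3 = ({a, b, d.snd} : Finset V).card := hcard3.symm
          _ ≤ (H.neighborFinset d.fst).card := Finset.card_le_card h3
          _ = H.degree d.fst := rfl
      have := hdegle d.fst
      omega
    have hedges : ∀ e ∈ c.edges, e ∈ G.edgeSet := fun e he =>
      hTsub (((edgeSet_fromEdgeSet T) ▸ c.edges_subset_edgeSet he).1)
    refine ⟨b0, c.transfer G hedges, ?_⟩
    rw [Walk.isHamiltonianCycle_iff_isCycle_and_support_count_tail_eq_one]
    refine ⟨hc.transfer hedges, fun v => ?_⟩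
    rw [Walk.support_transfer]
    refine List.count_eq_one_of_mem hc.support_nodup ?_
    have hv := hall v
    rw [Walk.support_eq_cons] at hv
    rcases List.mem_cons.mp hv with rfl | hv'
    · exact closed_mem_tail c hc.not_nil
    · exact hv'
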